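/- Let M : ℕ → ℝ be a positive log-convex sequence (condition (M.1)) with M 0 = 1 and lim_{p→∞} (M p)^(1/p) = ∞. Define the associated function ω_M(ρ) = sup_{p ∈ ℕ} log(ρ^p / M p) for ρ ≥ 0. Then log ρ = o(ω_M(ρ)) as ρ → ∞. -/

import Mathlib

open Filter Asymptotics

/-- The associated function `ω_M(ρ) = sup_{p} log(ρ^p / M p)` of a sequence `M`. -/
noncomputable def assocFun (M : ℕ → ℝ) (ρ : ℝ) : ℝ :=
  ⨆ p : ℕ, Real.log (ρ ^ p / M p)

lemma assocFun_bdd (M : ℕ → ℝ) (hpos : ∀ p, 0 < M p)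
    (hlim : Tendsto (fun p : ℕ => (M p) ^ ((p : ℝ)⁻¹)) atTop atTop)
    (ρ : ℝ) (hρ : 0 < ρ) :
    BddAbove (Set.range fun p : ℕ => Real.log (ρ ^ p / M p)) := by
  obtain ⟨N, hN⟩ := Filter.eventually_atTop.mp (hlim.eventually_ge_atTop ρ)
  refine ⟨max ((Finset.range (N + 1)).sup' ⟨0, by simp⟩ fun p => Real.log (ρ ^ p / M p)) 0, ?_⟩
  rintro x ⟨p, rfl⟩
  rcases le_or_gt p N with hp | hp
  · exact le_max_of_le_left (Finset.le_sup' (fun p => Real.log (ρ ^ p / M p))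
      (Finset.mem_range.mpr (Nat.lt_succ_of_le hp)))
  · refine le_max_of_le_right ?_
    have hp' : 0 < p := lt_of_le_of_lt (Nat.zero_le N) hp
    have h2 : ρ ^ p ≤ M p := by
      calc ρ ^ p = ρ ^ (p : ℝ) := (Real.rpow_natCast ρ p).symm
        _ ≤ ((M p) ^ ((p : ℝ)⁻¹)) ^ (p : ℝ) :=
            Real.rpow_le_rpow hρ.le (hN p hp.le) (Nat.cast_nonneg p)
        _ = M p := by
            rw [← Real.rpow_mul (hpos p).le,
              inv_mul_cancel₀ (Nat.cast_ne_zero.mpr hp'.ne'), Real.rpow_one]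
    exact Real.log_nonpos (div_nonneg (by positivity) (hpos p).le) ((div_le_one (hpos p)).mpr h2)

/-- If `M` is positive, log-convex (M.1), `M 0 = 1` and `(M p)^(1/p) → ∞`, then
`log ρ = o(ω_M(ρ))` as `ρ → ∞`. -/
theorem log_isLittleO_assocFun (M : ℕ → ℝ) (hpos : ∀ p, 0 < M p) (h0 : M 0 = 1)
    (hM1 : ∀ p, 1 ≤ p → (M p) ^ 2 ≤ M (p - 1) * M (p + 1))
    (hlim : Tendsto (fun p : ℕ => (M p) ^ ((p : ℝ)⁻¹)) atTop atTop) :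
    (fun ρ : ℝ => Real.log ρ) =o[atTop] (assocFun M) := by
  rw [isLittleO_iff]
  intro c hc
  set p := max ⌈2 / c⌉₊ 1 with hpdef
  have hcp : 2 ≤ c * p := by
    have h1 : (2 / c : ℝ) ≤ ⌈2 / c⌉₊ := Nat.le_ceil _
    have h2 : ((⌈2 / c⌉₊ : ℕ) : ℝ) ≤ (p : ℝ) := by
      exact_mod_cast le_max_left ⌈2 / c⌉₊ 1
    have : (2 / c : ℝ) ≤ (p : ℝ) := h1.trans h2
    calc (2 : ℝ) = c * (2 / c) := by field_simp
      _ ≤ c * p := mul_le_mul_of_nonneg_left this hc.le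
  set L := Real.log (M p) with hL
  filter_upwards [eventually_ge_atTop (1 : ℝ),
    eventually_ge_atTop (Real.exp (c * L))] with ρ h1 h2
  have hρ0 : (0 : ℝ) < ρ := lt_of_lt_of_le one_pos h1
  have hlogρ : 0 ≤ Real.log ρ := Real.log_nonneg h1
  have hcL : c * L ≤ Real.log ρ := by
    have := Real.log_le_log (Real.exp_pos _) h2
    rwa [Real.log_exp] at this
  have hbdd := assocFun_bdd M hpos hlim ρ hρ0
  have hω0 : 0 ≤ assocFun M ρ := by
    have := le_ciSup hbdd 0
    exact (by simpa [h0] using this : 0 ≤ ⨆ p : ℕ, Real.log (ρ ^ p / M p))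
  have hωp : (p : ℝ) * Real.log ρ - L ≤ assocFun M ρ := by
    have := le_ciSup hbdd p
    rwa [Real.log_div (by positivity) (hpos p).ne', Real.log_pow] at this
  rw [Real.norm_eq_abs, Real.norm_eq_abs, abs_of_nonneg hlogρ, abs_of_nonneg hω0]
  have hcp' : 2 * Real.log ρ ≤ c * (p : ℝ) * Real.log ρ :=
    mul_le_mul_of_nonneg_right hcp hlogρ
  nlinarith [mul_le_mul_of_nonneg_left hωp hc.le]
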